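/- Let k be an integer with k > 1 and let y ∈ ℤ[1/k]. If k^n − 1 divides y in the ring ℤ[1/k] for every positive integer n, then y = 0. -/

import Mathlib

/-- The subring `ℤ[1/k] = {z·k^i : z, i ∈ ℤ}` of `ℚ`, as a set. -/
def zkSet (k : ℤ) : Set ℚ := {q | ∃ z i : ℤ, q = (z : ℚ) * (k : ℚ) ^ i}

/-- If an integer `z'` equals `(k^n - 1) * (w * k^e)` in `ℚ`, then `k^n - 1 ∣ z'` in `ℤ`. -/
lemma dvd_step (k : ℤ) (hk : 1 < k) (n : ℕ) (hn : 0 < n) (z' w : ℤ) (e : ℤ)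
    (heq : (z' : ℚ) = ((k : ℚ) ^ n - 1) * ((w : ℚ) * (k : ℚ) ^ e)) :
    (k ^ n - 1 : ℤ) ∣ z' := by
  have hk0 : (k : ℚ) ≠ 0 := by positivity
  have hcop : IsCoprime (k ^ n - 1 : ℤ) k := by
    refine ⟨-1, k ^ (n - 1), ?_⟩
    have : k ^ (n - 1) * k = k ^ n := by
      rw [← pow_succ]
      congr 1
      omega
    linarith [this]
  rcases le_or_gt 0 e with he | he
  · have hcast : (z' : ℚ) = (((k ^ n - 1) * (w * k ^ e.toNat) : ℤ) : ℚ) := by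
      push_cast
      rw [heq]
      congr 1
      congr 1
      rw [← zpow_natCast (k : ℚ), Int.toNat_of_nonneg he]
    have : z' = (k ^ n - 1) * (w * k ^ e.toNat) := by exact_mod_cast hcast
    exact ⟨_, this⟩
  · set f : ℕ := (-e).toNat with hf
    have hef : e = -(f : ℤ) := by omega
    have hmul : (z' : ℚ) * (k : ℚ) ^ f = ((k : ℚ) ^ n - 1) * w := by
      rw [heq, hef, zpow_neg, zpow_natCast]
      field_simp
    have hint : z' * k ^ f = (k ^ n - 1) * w := by exact_mod_cast hmul
    have hdvd : (k ^ n - 1 : ℤ) ∣ z' * k ^ f := ⟨w, hint⟩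
    exact (hcop.pow_right).dvd_of_dvd_mul_right hdvd

theorem eq_zero_of_forall_pow_sub_one_dvd (k : ℤ) (hk : 1 < k) (y : ℚ) (hy : y ∈ zkSet k)
    (h : ∀ n : ℤ, 0 < n → ∃ c ∈ zkSet k, y = ((k : ℚ) ^ n - 1) * c) :
    y = 0 := by
  have hk0 : (k : ℚ) ≠ 0 := by positivity
  obtain ⟨z, i, hzi⟩ := hy
  -- clear denominators: y * k^m = z' for a fixed integer z'
  set m : ℕ := (-i).toNat with hm
  have him : (0 : ℤ) ≤ i + m := by omega
  set z' : ℤ := z * k ^ (i + (m : ℤ)).toNat with hz'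
  have hyz' : (z' : ℚ) = y * (k : ℚ) ^ (m : ℕ) := by
    rw [hzi, hz']
    push_cast
    rw [mul_assoc, ← zpow_natCast (k : ℚ) m, ← zpow_add₀ hk0,
      ← zpow_natCast (k : ℚ) (i + (m : ℤ)).toNat, Int.toNat_of_nonneg him]
  -- for every n > 0, k^n - 1 divides z' in ℤ
  have key : ∀ n : ℕ, 0 < n → (k ^ n - 1 : ℤ) ∣ z' := by
    intro n hn
    obtain ⟨c, ⟨w, j, hwj⟩, hc⟩ := h n (by exact_mod_cast hn)
    have heq : (z' : ℚ) = ((k : ℚ) ^ n - 1) * ((w : ℚ) * (k : ℚ) ^ (j + (m : ℤ))) := by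
      rw [hyz', hc, hwj, zpow_add₀ hk0]
      simp only [zpow_natCast]
      ring
    exact dvd_step k hk n hn z' w (j + m) heq
  -- take n large
  have hz0 : z' = 0 := by
    set n : ℕ := z'.natAbs + 1 with hn
    have hd := key n (by omega)
    have h2 : (2 : ℤ) ^ n ≤ k ^ n := pow_le_pow_left₀ (by norm_num) (by omega) n
    have h3 : (n : ℤ) < 2 ^ n := by exact_mod_cast Nat.lt_two_pow_self (n := n)
    have habs : |z'| < k ^ n - 1 := by
      have : (z'.natAbs : ℤ) = |z'| := Int.abs_eq_natAbs z' ▸ rfl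
      omega
    exact Int.eq_zero_of_abs_lt_dvd hd habs
  have : y * (k : ℚ) ^ (m : ℕ) = 0 := by rw [← hyz', hz0]; norm_num
  rcases mul_eq_zero.mp this with h0 | h0
  · exact h0
  · exact absurd h0 (pow_ne_zero _ hk0)
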